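/- In the Klein bottle group K = ⟨a, b | b⁻¹ab = a⁻¹⟩, an element commutes with all squares of elements of K if and only if it lies in the subgroup ⟨a, b²⟩. -/

import Mathlib

/-- The single relator `b⁻¹ * a * b * a` of the Klein bottle group
`K = ⟨a, b ∣ b⁻¹ a b = a⁻¹⟩`, with generator `0 = a`, `1 = b`. -/
def KleinRels : Set (FreeGroup (Fin 2)) :=
  {(FreeGroup.of 1)⁻¹ * FreeGroup.of 0 * FreeGroup.of 1 * FreeGroup.of 0}

/-- The Klein bottle group. -/
abbrev KleinGroup := PresentedGroup KleinRels

def aK : KleinGroup := PresentedGroup.of 0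
def bK : KleinGroup := PresentedGroup.of 1


lemma klein_rel : bK⁻¹ * aK * bK * aK = 1 := by
  have h : ((FreeGroup.of 1)⁻¹ * FreeGroup.of 0 * FreeGroup.of 1 * FreeGroup.of 0 :
      FreeGroup (Fin 2)) ∈ Subgroup.normalClosure KleinRels :=
    Subgroup.subset_normalClosure rfl
  have h2 : PresentedGroup.mk KleinRels
      ((FreeGroup.of 1)⁻¹ * FreeGroup.of 0 * FreeGroup.of 1 * FreeGroup.of 0) = 1 :=
    (QuotientGroup.eq_one_iff _).mpr h
  simpa [aK, bK, PresentedGroup.of, map_mul, map_inv] using h2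

lemma k_conj : bK⁻¹ * aK * bK = aK⁻¹ := eq_inv_of_mul_eq_one_left klein_rel

lemma h1_conj : bK * aK * bK⁻¹ = aK⁻¹ := by
  have k2 : aK = bK * aK⁻¹ * bK⁻¹ := by rw [← k_conj]; group
  simpa [mul_inv_rev, mul_assoc] using (congrArg Inv.inv k2).symm

lemma swap1 (m : ℤ) : bK * aK ^ m = aK ^ (-m) * bK := by
  have h2 : (bK * aK * bK⁻¹) ^ m = bK * aK ^ m * bK⁻¹ := conj_zpow
  rw [h1_conj] at h2
  have h3 : aK ^ (-m) = bK * aK ^ m * bK⁻¹ := by rw [← h2]; group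
  rw [h3]; group

def epsK (n : ℤ) : ℤ := if Even n then 1 else -1

lemma epsK_succ (n : ℤ) : epsK (n + 1) = -epsK n := by
  by_cases h : Even n <;> simp [epsK, Int.even_add_one, h]

lemma epsK_pred (n : ℤ) : epsK (n - 1) = -epsK n := by
  by_cases h : Even n <;> simp [epsK, Int.even_sub_one, h]

lemma swapK (n : ℤ) : ∀ m : ℤ, bK ^ n * aK ^ m = aK ^ (epsK n * m) * bK ^ n := by
  induction n using Int.induction_on with
  | zero => intro m; simp [epsK]
  | succ k ih =>
    intro m
    have : bK ^ ((k : ℤ) + 1) * aK ^ m = bK ^ (k : ℤ) * (bK * aK ^ m) := by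
      rw [zpow_add_one]; group
    rw [this, swap1, ← mul_assoc, ih (-m), epsK_succ, mul_assoc, ← zpow_add_one]
    ring_nf
  | pred k ih =>
    intro m
    have hs : aK ^ (-m) * bK⁻¹ = bK⁻¹ * aK ^ m := by
      have := swap1 (-m)
      rw [neg_neg] at this
      calc aK ^ (-m) * bK⁻¹ = bK⁻¹ * (bK * aK ^ (-m)) * bK⁻¹ := by group
        _ = bK⁻¹ * (aK ^ m * bK) * bK⁻¹ := by rw [this]
        _ = bK⁻¹ * aK ^ m := by group
    have : bK ^ (-(k : ℤ) - 1) * aK ^ m = bK ^ (-(k : ℤ)) * (bK⁻¹ * aK ^ m) := by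
      rw [zpow_sub_one]; group
    rw [this, ← hs, ← mul_assoc, ih (-m), epsK_pred, mul_assoc, ← zpow_sub_one]
    ring_nf

lemma normal_form (x : KleinGroup) : ∃ m n : ℤ, x = aK ^ m * bK ^ n := by
  induction x using PresentedGroup.induction_on with
  | H z =>
    induction z using FreeGroup.induction_on with
    | C1 => exact ⟨0, 0, by simp⟩
    | of x =>
      fin_cases x
      · exact ⟨1, 0, by simp [aK, PresentedGroup.of]⟩
      · exact ⟨0, 1, by simp [bK, PresentedGroup.of]⟩
    | inv_of x _ =>
      fin_cases x
      · exact ⟨-1, 0, by simp [aK, PresentedGroup.of]⟩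
      · exact ⟨0, -1, by simp [bK, PresentedGroup.of]⟩
    | mul y z hy hz =>
      obtain ⟨m, n, hy⟩ := hy
      obtain ⟨m', n', hz⟩ := hz
      refine ⟨m + epsK n * m', n + n', ?_⟩
      have : PresentedGroup.mk KleinRels (y * z)
          = PresentedGroup.mk KleinRels y * PresentedGroup.mk KleinRels z := map_mul _ _ _
      rw [this, hy, hz, mul_assoc, ← mul_assoc (bK ^ n), swapK n m', zpow_add, zpow_add]
      group

def kleinF : Fin 2 → Equiv.Perm ℤ := ![Equiv.addRight 1, Equiv.neg ℤ]

lemma kleinF_rels : ∀ r ∈ KleinRels, FreeGroup.lift kleinF r = 1 := by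
  intro r hr
  rw [KleinRels, Set.mem_singleton_iff] at hr
  subst hr
  simp only [map_mul, map_inv, FreeGroup.lift_apply_of]
  ext x
  simp only [kleinF, Equiv.Perm.mul_apply, Matrix.cons_val_zero, Matrix.cons_val_one,
    Matrix.head_cons, Equiv.coe_addRight, Equiv.neg_apply, Equiv.Perm.one_apply]
  have h : -(x + 1) + 1 = (Equiv.neg ℤ) x := by
    simp only [Equiv.neg_apply]; ring
  rw [h, Equiv.Perm.inv_def, Equiv.symm_apply_apply]

noncomputable def kleinPsi : KleinGroup →* Equiv.Perm ℤ := PresentedGroup.toGroup kleinF_rels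

lemma addRight_one_zpow (p : ℤ) : (Equiv.addRight (1 : ℤ)) ^ p = Equiv.addRight p := by
  induction p using Int.induction_on with
  | zero => ext x; simp
  | succ k ih => rw [zpow_add_one, ih]; ext x; simp [Equiv.Perm.mul_apply]; ring
  | pred k ih => rw [zpow_sub_one, ih]; ext x; simp [Equiv.Perm.mul_apply, Equiv.Perm.inv_def]; ring

lemma aK_zpow_eq_one {p : ℤ} (h : aK ^ p = 1) : p = 0 := by
  have h2 : kleinPsi (aK ^ p) = 1 := by rw [h]; exact map_one _
  rw [map_zpow] at h2
  have h3 : kleinPsi aK = Equiv.addRight (1 : ℤ) := by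
    simp [kleinPsi, aK, PresentedGroup.toGroup.of, kleinF]
  rw [h3, addRight_one_zpow] at h2
  have := congrArg (fun e : Equiv.Perm ℤ => e 0) h2
  simpa using this

lemma aK_zpow_inj {p q : ℤ} (h : aK ^ p = aK ^ q) : p = q := by
  have h1 : aK ^ (p - q) = 1 := by rw [zpow_sub, h, mul_inv_cancel]
  have := aK_zpow_eq_one h1
  omega

lemma comm_a_b2 : Commute aK (bK ^ 2) := by
  have h := swapK 2 1
  simp only [epsK] at h
  norm_num at h
  exact (show Commute (bK ^ 2) aK from h).symm

lemma sq_form (x : KleinGroup) : ∃ m n : ℤ, x ^ 2 = aK ^ (m + epsK n * m) * (bK ^ 2) ^ n := by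
  obtain ⟨m, n, hx⟩ := normal_form x
  refine ⟨m, n, ?_⟩
  have hb : (bK ^ 2) ^ n = bK ^ (2 * n) := by
    rw [← zpow_natCast bK 2, ← zpow_mul]; norm_num
  rw [sq, hx, hb]
  calc aK ^ m * bK ^ n * (aK ^ m * bK ^ n)
      = aK ^ m * (bK ^ n * aK ^ m) * bK ^ n := by group
    _ = aK ^ m * (aK ^ (epsK n * m) * bK ^ n) * bK ^ n := by rw [swapK]
    _ = aK ^ m * aK ^ (epsK n * m) * (bK ^ n * bK ^ n) := by group
    _ = aK ^ (m + epsK n * m) * bK ^ (2 * n) := by rw [← zpow_add, ← zpow_add, two_mul]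

/-- An element of the Klein bottle group commutes with all squares
iff it lies in `⟨a, b²⟩`. -/
theorem commutes_with_squares_iff (g : KleinGroup) :
    (∀ x : KleinGroup, Commute g (x ^ 2)) ↔ g ∈ Subgroup.closure {aK, bK ^ 2} := by
  constructor
  · intro hcom
    obtain ⟨m, n, hg⟩ := normal_form g
    have hx := (hcom aK).eq
    rw [hg] at hx
    have ha2 : (aK ^ 2 : KleinGroup) = aK ^ (2:ℤ) := by norm_cast
    rw [ha2] at hx
    have key : aK ^ (m + epsK n * 2) * bK ^ n = aK ^ ((2:ℤ) + m) * bK ^ n := by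
      calc aK ^ (m + epsK n * 2) * bK ^ n
          = aK ^ m * (aK ^ (epsK n * 2) * bK ^ n) := by rw [zpow_add]; group
        _ = aK ^ m * (bK ^ n * aK ^ (2:ℤ)) := by rw [swapK]
        _ = aK ^ m * bK ^ n * aK ^ (2:ℤ) := by group
        _ = aK ^ (2:ℤ) * (aK ^ m * bK ^ n) := hx
        _ = aK ^ ((2:ℤ) + m) * bK ^ n := by rw [zpow_add]; group
    have hmn := aK_zpow_inj (mul_right_cancel key)
    have heps : epsK n = 1 := by omega
    have hev : Even n := by
      by_contra ho
      simp [epsK, ho] at heps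
    obtain ⟨k, hk⟩ := hev
    have hgk : g = aK ^ m * (bK ^ 2) ^ k := by
      rw [hg, hk]
      congr 1
      rw [← zpow_natCast bK 2, ← zpow_mul]
      norm_num
      rw [two_mul]
    rw [hgk]
    exact Subgroup.mul_mem _
      (Subgroup.zpow_mem _ (Subgroup.subset_closure (by simp)) m)
      (Subgroup.zpow_mem _ (Subgroup.subset_closure (by simp)) k)
  · intro hg x
    obtain ⟨m, n, hx2⟩ := sq_form x
    have c1 : Commute aK (x ^ 2) := by
      rw [hx2]
      exact ((Commute.refl aK).zpow_right _).mul_right (comm_a_b2.zpow_right n)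
    have c2 : Commute (bK ^ 2) (x ^ 2) := by
      rw [hx2]
      exact (comm_a_b2.symm.zpow_right _).mul_right ((Commute.refl _).zpow_right n)
    refine Subgroup.closure_induction ?_ ?_ ?_ ?_ hg
    · intro y hy
      rcases hy with h | h
      · rw [h]; exact c1
      · rw [h]; exact c2
    · exact Commute.one_left _
    · intro y z _ _ hy hz; exact hy.mul_left hz
    · intro y _ hy; exact hy.inv_left
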